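/- For any q-partition V_0, …, V_{q−1} of G, if λ_q > 0 then modaldist ≤ (1/λ_q) · √(2/(n−q)) · avgrelout. -/

import Mathlib

open Matrix

/-- The weighted degree matrix of `A`. -/
noncomputable def degMat {n : ℕ} (A : Matrix (Fin n) (Fin n) ℝ) :
    Matrix (Fin n) (Fin n) ℝ :=
  Matrix.diagonal (fun k => ∑ l, A k l)

/-- The graph Laplacian `L = D - A`. -/
noncomputable def lap {n : ℕ} (A : Matrix (Fin n) (Fin n) ℝ) :
    Matrix (Fin n) (Fin n) ℝ :=
  degMat A - A

/-- The unit vector that is uniform (`1/√|V j|`) on part `V j` and `0` elsewhere. -/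
noncomputable def ubar {n q : ℕ} (V : Fin q → Finset (Fin n)) (j : Fin q) :
    Fin n → ℝ :=
  fun i => if i ∈ V j then (Real.sqrt ((V j).card))⁻¹ else 0

/-- The relative outgoing weight of the part `V j`. -/
noncomputable def relout {n q : ℕ} (A : Matrix (Fin n) (Fin n) ℝ)
    (V : Fin q → Finset (Fin n)) (j : Fin q) : ℝ :=
  (Real.sqrt ((V j).card))⁻¹ * ∑ k ∈ V j, ∑ l ∈ (V j)ᶜ, A k l

/-- The average relative outgoing weight of a `q`-partition. -/
noncomputable def avgrelout {n q : ℕ} (A : Matrix (Fin n) (Fin n) ℝ)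
    (V : Fin q → Finset (Fin n)) : ℝ :=
  Real.sqrt ((1 / (q : ℝ)) * ∑ j : Fin q, (relout A V j) ^ 2)

/-- The `q`-modal distance of the graph from the partition, for an orthonormal family
of Laplacian eigenvectors `u` (ordered by increasing eigenvalue). -/
noncomputable def modaldist {n q : ℕ} (u : Fin n → Fin n → ℝ)
    (V : Fin q → Finset (Fin n)) : ℝ :=
  Real.sqrt ((1 / ((q : ℝ) * ((n : ℝ) - (q : ℝ)))) *
    ∑ j : Fin q, ∑ k ∈ Finset.univ.filter (fun k : Fin n => q ≤ (k : ℕ)),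
      (∑ a, ubar V j a * u k a) ^ 2)

/-- Parseval: an orthonormal family of `n` vectors in `ℝⁿ` is a basis. -/
lemma parseval_aux {n : ℕ} (u : Fin n → Fin n → ℝ)
    (horth : ∀ i j : Fin n, (∑ a, u i a * u j a) = if i = j then (1:ℝ) else 0)
    (v : Fin n → ℝ) :
    ∑ k, (∑ a, v a * u k a)^2 = ∑ a, (v a)^2 := by
  have hcols : ∀ a b : Fin n, (∑ k, u k a * u k b) = if a = b then (1:ℝ) else 0 := by
    have h1 : (Matrix.of u) * (Matrix.of u)ᵀ = 1 := by
      ext i j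
      simpa [Matrix.mul_apply, Matrix.one_apply] using horth i j
    have h2 : (Matrix.of u)ᵀ * (Matrix.of u) = 1 := mul_eq_one_comm.mp h1
    intro a b
    have := congrFun (congrFun h2 a) b
    simpa [Matrix.mul_apply, Matrix.one_apply] using this
  calc ∑ k, (∑ a, v a * u k a)^2
      = ∑ k, ∑ a, ∑ b, (v a * v b) * (u k a * u k b) := by
        refine Finset.sum_congr rfl fun k _ => ?_
        rw [sq, Finset.sum_mul_sum]
        exact Finset.sum_congr rfl fun a _ => Finset.sum_congr rfl fun b _ => by ring
    _ = ∑ a, ∑ b, (v a * v b) * ∑ k, (u k a * u k b) := by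
        rw [Finset.sum_comm]
        refine Finset.sum_congr rfl fun a _ => ?_
        rw [Finset.sum_comm]
        exact Finset.sum_congr rfl fun b _ => (Finset.mul_sum _ _ _).symm
    _ = ∑ a, (v a)^2 := by
        refine Finset.sum_congr rfl fun a _ => ?_
        simp [hcols, mul_ite, Finset.sum_ite_eq, sq]

/-- The Laplacian of a symmetric matrix is symmetric. -/
lemma lap_symm_aux {n : ℕ} (A : Matrix (Fin n) (Fin n) ℝ)
    (hsymm : ∀ k l, A k l = A l k) :
    ∀ a b, lap A a b = lap A b a := by
  intro a b
  by_cases h : a = b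
  · subst h; rfl
  · simp [lap, degMat, Matrix.sub_apply, Matrix.diagonal_apply, h, Ne.symm h, hsymm a b]

/-- Dot product of `L x` with an eigenvector. -/
lemma eig_dot_aux {n : ℕ} (A : Matrix (Fin n) (Fin n) ℝ) (lam : Fin n → ℝ)
    (u : Fin n → Fin n → ℝ)
    (heig : ∀ i : Fin n, (lap A).mulVec (u i) = lam i • u i)
    (hLsymm : ∀ a b, lap A a b = lap A b a)
    (x : Fin n → ℝ) (k : Fin n) :
    (∑ a, (lap A).mulVec x a * u k a) = lam k * ∑ a, x a * u k a := by
  have hb : ∀ b, (∑ a, lap A b a * u k a) = lam k * u k b := by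
    intro b
    have := congrFun (heig k) b
    simpa [Matrix.mulVec, dotProduct, Pi.smul_apply, smul_eq_mul] using this
  calc ∑ a, (lap A).mulVec x a * u k a
      = ∑ a, ∑ b, lap A a b * x b * u k a := by
        refine Finset.sum_congr rfl fun a _ => ?_
        rw [Matrix.mulVec, dotProduct, Finset.sum_mul]
    _ = ∑ b, ∑ a, lap A a b * x b * u k a := Finset.sum_comm
    _ = ∑ b, x b * ∑ a, lap A b a * u k a := by
        refine Finset.sum_congr rfl fun b _ => ?_
        rw [Finset.mul_sum]
        refine Finset.sum_congr rfl fun a _ => ?_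
        rw [hLsymm a b]; ring
    _ = ∑ b, x b * (lam k * u k b) := Finset.sum_congr rfl fun b _ => by rw [hb b]
    _ = lam k * ∑ b, x b * u k b := by
        rw [Finset.mul_sum]; exact Finset.sum_congr rfl fun b _ => by ring

/-- The squared norm of `L ū_j` is at most `2 relout_j²`. -/
lemma energy_aux {n q : ℕ} (A : Matrix (Fin n) (Fin n) ℝ)
    (hsymm : ∀ k l, A k l = A l k) (hnonneg : ∀ k l, 0 ≤ A k l)
    (V : Fin q → Finset (Fin n)) (j : Fin q) :
    ∑ a, ((lap A).mulVec (ubar V j) a)^2 ≤ 2 * (relout A V j)^2 := by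
  set s : ℝ := (Real.sqrt ((V j).card))⁻¹ with hsdef
  set B : Fin n → ℝ := fun a => ∑ b ∈ (V j)ᶜ, A a b with hBdef
  set C : Fin n → ℝ := fun a => ∑ b ∈ V j, A a b with hCdef
  have hBnn : ∀ a, 0 ≤ B a := fun a => Finset.sum_nonneg fun b _ => hnonneg a b
  have hCnn : ∀ a, 0 ≤ C a := fun a => Finset.sum_nonneg fun b _ => hnonneg a b
  have hmv : ∀ a, (lap A).mulVec (ubar V j) a =
      if a ∈ V j then s * B a else -(s * C a) := by
    intro a
    have h1 : (lap A).mulVec (ubar V j) a = s * ∑ b ∈ V j, lap A a b := by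
      rw [Matrix.mulVec, dotProduct, Finset.mul_sum]
      rw [← Finset.sum_subset (Finset.subset_univ (V j))
        (fun x _ hx => by simp [ubar, hx])]
      refine Finset.sum_congr rfl fun b hb => ?_
      simp [ubar, hb, hsdef]; ring
    have h2 : ∑ b ∈ V j, lap A a b = if a ∈ V j then B a else -(C a) := by
      simp only [lap, degMat, Matrix.sub_apply, Matrix.diagonal_apply,
        Finset.sum_sub_distrib, Finset.sum_ite_eq]
      by_cases h : a ∈ V j
      · simp only [h, if_true, hBdef, hCdef]
        rw [← Finset.sum_add_sum_compl (V j) (A a)]; ring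
      · simp [h, hCdef]
    rw [h1, h2]
    by_cases h : a ∈ V j <;> simp [h]
  have hsplit : ∑ a, ((lap A).mulVec (ubar V j) a)^2
      = ∑ a ∈ V j, (s * B a)^2 + ∑ a ∈ (V j)ᶜ, (s * C a)^2 := by
    rw [← Finset.sum_add_sum_compl (V j)]
    congr 1
    · exact Finset.sum_congr rfl fun a ha => by rw [hmv a, if_pos ha]
    · refine Finset.sum_congr rfl fun a ha => ?_
      rw [hmv a, if_neg (Finset.mem_compl.mp ha), neg_sq]
  have hCB : ∑ a ∈ (V j)ᶜ, C a = ∑ a ∈ V j, B a := by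
    simp only [hBdef, hCdef]
    refine Finset.sum_comm.trans ?_
    exact Finset.sum_congr rfl fun a _ => Finset.sum_congr rfl fun b _ => hsymm b a
  have hrel : relout A V j = s * ∑ a ∈ V j, B a := rfl
  have h3 : ∑ a ∈ V j, (s * B a)^2 ≤ (relout A V j)^2 := by
    rw [hrel, mul_pow]
    calc ∑ a ∈ V j, (s * B a)^2 = s^2 * ∑ a ∈ V j, (B a)^2 := by
          rw [Finset.mul_sum]; exact Finset.sum_congr rfl fun a _ => by ring
      _ ≤ s^2 * (∑ a ∈ V j, B a)^2 := by
          apply mul_le_mul_of_nonneg_left _ (sq_nonneg s)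
          exact Finset.sum_sq_le_sq_sum_of_nonneg fun a _ => hBnn a
  have h4 : ∑ a ∈ (V j)ᶜ, (s * C a)^2 ≤ (relout A V j)^2 := by
    rw [hrel, mul_pow, ← hCB]
    calc ∑ a ∈ (V j)ᶜ, (s * C a)^2 = s^2 * ∑ a ∈ (V j)ᶜ, (C a)^2 := by
          rw [Finset.mul_sum]; exact Finset.sum_congr rfl fun a _ => by ring
      _ ≤ s^2 * (∑ a ∈ (V j)ᶜ, C a)^2 := by
          apply mul_le_mul_of_nonneg_left _ (sq_nonneg s)
          exact Finset.sum_sq_le_sq_sum_of_nonneg fun a _ => hCnn a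
  rw [hsplit]; linarith

/-- for any q-partition, if `λ_q > 0` then
`modaldist ≤ (1/λ_q) √(2/(n−q)) avgrelout`. -/
theorem stmt_2 (n q : ℕ) (hq1 : 1 ≤ q) (hqn : q < n)
    (A : Matrix (Fin n) (Fin n) ℝ)
    (hsymm : ∀ k l, A k l = A l k)
    (hnonneg : ∀ k l, 0 ≤ A k l)
    (hdiag : ∀ k, A k k = 0)
    (lam : Fin n → ℝ)
    (hmono : Monotone lam)
    (hlam0 : lam ⟨0, Nat.lt_of_le_of_lt (Nat.zero_le q) hqn⟩ = 0)
    (u : Fin n → Fin n → ℝ)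
    (horth : ∀ i j : Fin n, (∑ a, u i a * u j a) = if i = j then (1 : ℝ) else 0)
    (heig : ∀ i : Fin n, (lap A).mulVec (u i) = lam i • u i)
    (V : Fin q → Finset (Fin n))
    (hne : ∀ j, (V j).Nonempty)
    (hdisj : ∀ j j' : Fin q, j ≠ j' → Disjoint (V j) (V j'))
    (hcover : ∀ i : Fin n, ∃ j : Fin q, i ∈ V j)
    (hlamq : 0 < lam ⟨q, hqn⟩) :
    modaldist u V
      ≤ (1 / lam ⟨q, hqn⟩) * Real.sqrt (2 / ((n : ℝ) - (q : ℝ))) * avgrelout A V := by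
  set lq := lam ⟨q, hqn⟩ with hlqdef
  have hqR : (0:ℝ) < q := by exact_mod_cast hq1
  have hnqR : (0:ℝ) < (n:ℝ) - q := by
    have : (q:ℝ) < n := by exact_mod_cast hqn
    linarith
  have hLsymm := lap_symm_aux A hsymm
  set T : ℝ := ∑ j : Fin q, (relout A V j)^2 with hT
  have hTnn : 0 ≤ T := Finset.sum_nonneg fun j _ => sq_nonneg _
  have hS : ∀ j, ∑ k ∈ Finset.univ.filter (fun k : Fin n => q ≤ (k : ℕ)),
      (∑ a, ubar V j a * u k a)^2 ≤ (2 / lq^2) * (relout A V j)^2 := by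
    intro j
    have hpar : ∑ k, (lam k * ∑ a, ubar V j a * u k a)^2
        = ∑ a, ((lap A).mulVec (ubar V j) a)^2 := by
      rw [← parseval_aux u horth ((lap A).mulVec (ubar V j))]
      exact Finset.sum_congr rfl fun k _ => by
        rw [eig_dot_aux A lam u heig hLsymm (ubar V j) k]
    have h1 : lq^2 * ∑ k ∈ Finset.univ.filter (fun k : Fin n => q ≤ (k : ℕ)),
        (∑ a, ubar V j a * u k a)^2
        ≤ ∑ k, (lam k * ∑ a, ubar V j a * u k a)^2 := by
      rw [Finset.mul_sum]
      calc ∑ k ∈ Finset.univ.filter (fun k : Fin n => q ≤ (k : ℕ)),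
            lq^2 * (∑ a, ubar V j a * u k a)^2
          ≤ ∑ k ∈ Finset.univ.filter (fun k : Fin n => q ≤ (k : ℕ)),
            (lam k * ∑ a, ubar V j a * u k a)^2 := by
            refine Finset.sum_le_sum fun k hk => ?_
            have hk' : lq ≤ lam k := by
              apply hmono
              have : q ≤ (k : ℕ) := (Finset.mem_filter.mp hk).2
              simpa [Fin.le_def] using this
            rw [mul_pow]
            exact mul_le_mul_of_nonneg_right
              (pow_le_pow_left₀ hlamq.le hk' 2) (sq_nonneg _)
        _ ≤ ∑ k, (lam k * ∑ a, ubar V j a * u k a)^2 :=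
            Finset.sum_le_sum_of_subset_of_nonneg (Finset.filter_subset _ _)
              (fun k _ _ => sq_nonneg _)
    have h2 := energy_aux A hsymm hnonneg V j
    have hlq2 : (0:ℝ) < lq^2 := by positivity
    rw [div_mul_eq_mul_div, le_div_iff₀ hlq2, mul_comm]
    rw [hpar] at h1
    linarith
  have hsum : ∑ j : Fin q, ∑ k ∈ Finset.univ.filter (fun k : Fin n => q ≤ (k : ℕ)),
      (∑ a, ubar V j a * u k a)^2 ≤ (2 / lq^2) * T := by
    rw [hT, Finset.mul_sum]
    exact Finset.sum_le_sum fun j _ => hS j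
  have hmain : (1 / ((q:ℝ) * ((n:ℝ) - q))) * ∑ j : Fin q,
      ∑ k ∈ Finset.univ.filter (fun k : Fin n => q ≤ (k : ℕ)),
      (∑ a, ubar V j a * u k a)^2
      ≤ (1/lq)^2 * ((2 / ((n:ℝ) - q)) * ((1/(q:ℝ)) * T)) := by
    have hfac : (1 / ((q:ℝ) * ((n:ℝ) - q))) * ((2 / lq^2) * T)
        = (1/lq)^2 * ((2 / ((n:ℝ) - q)) * ((1/(q:ℝ)) * T)) := by
      field_simp
      try exact Or.inl trivial
    rw [← hfac]
    exact mul_le_mul_of_nonneg_left hsum (by positivity)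
  have hRHS : (1/lq) * Real.sqrt (2/((n:ℝ)-q)) * Real.sqrt ((1/(q:ℝ))*T)
      = Real.sqrt ((1/lq)^2 * ((2/((n:ℝ)-q)) * ((1/(q:ℝ))*T))) := by
    rw [Real.sqrt_mul (sq_nonneg (1/lq)) ((2/((n:ℝ)-q)) * ((1/(q:ℝ))*T)),
      Real.sqrt_sq (by positivity : (0:ℝ) ≤ 1/lq),
      Real.sqrt_mul (by positivity : (0:ℝ) ≤ 2/((n:ℝ)-q)) ((1/(q:ℝ))*T)]
    ring
  unfold modaldist avgrelout
  rw [← hT, hRHS]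
  exact Real.sqrt_le_sqrt hmain
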